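/- Let F be a field, n ≥ 2, p ≥ 1, and let α, β be nonzero elements of F with α² + β² + p·α·β = 0 (equivalently, p = −αβ⁻¹ − α⁻¹β in F). Put A_i = α·h_i^n + β·1_{p^n} for 1 ≤ i ≤ n−1. Then: A_i·A_j = A_j·A_i whenever |i − j| ≥ 2; A_i·A_{i+1}·A_i = A_{i+1}·A_i·A_{i+1}; and each A_i is invertible with inverse α⁻¹·h_i^n + β⁻¹·1_{p^n}. Consequently there is a group homomorphism from the braid group B_n — the group presented by generators σ_1, …, σ_{n−1} and relations σ_iσ_j = σ_jσ_i for |i − j| ≥ 2 and σ_iσ_{i+1}σ_i = σ_{i+1}σ_iσ_{i+1} — to the group of invertible p^n × p^n matrices over F, sending σ_i to A_i. -/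

import Mathlib

open Matrix

/-- The Kronecker product of an `a × b` matrix and a `c × d` matrix, as an
`(a·c) × (b·d)` matrix: the entry at row `r = r₁·c + r₂` and column `s = s₁·d + s₂`
(with `r₂ < c`, `s₂ < d`) is `A r₁ s₁ * B r₂ s₂`. -/
def kron {F : Type*} [Mul F] {a b c d : ℕ}
    (A : Matrix (Fin a) (Fin b) F) (B : Matrix (Fin c) (Fin d) F) :
    Matrix (Fin (a * c)) (Fin (b * d)) F :=
  Matrix.of fun r s => A r.divNat s.divNat * B r.modNat s.modNat

/-- The `1 × p²` matrix `E_p`, whose entry in column `(i−1)p + j` (for `1 ≤ i, j ≤ p`)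
is `1` if `i = j` and `0` otherwise. -/
def Ep (F : Type*) [Zero F] [One F] (p : ℕ) : Matrix (Fin 1) (Fin (p * p)) F :=
  Matrix.of fun _ s => if s.divNat = s.modNat then 1 else 0

/-- The `m × p²m` matrix `φ_m = E_p ⊗ 1_m` (the counit of the self-adjunction of the
functor `p ⊗` on matrices). -/
def phiMat (F : Type*) [Semiring F] (p m : ℕ) : Matrix (Fin m) (Fin (p * p * m)) F :=
  Matrix.reindex (finCongr (Nat.one_mul m)) (Equiv.refl _)
    (kron (Ep F p) (1 : Matrix (Fin m) (Fin m) F))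

/-- The `p²m × m` matrix `γ_m = E_p' ⊗ 1_m`, where `E_p'` is the transpose of `E_p`
(the unit of the self-adjunction of the functor `p ⊗` on matrices). -/
def gammaMat (F : Type*) [Semiring F] (p m : ℕ) : Matrix (Fin (p * p * m)) (Fin m) F :=
  Matrix.reindex (Equiv.refl _) (finCongr (Nat.one_mul m))
    (kron (Ep F p)ᵀ (1 : Matrix (Fin m) (Fin m) F))

/-- The `p^n × p^n` matrix `h_k^n = 1_{p^{n−k−1}} ⊗ (E_p' · E_p) ⊗ 1_{p^{k−1}}`
(for `1 ≤ k ≤ n − 1`), reindexed along `p^{n−k−1} · p² · p^{k−1} = p^n`. -/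
def hMat (F : Type*) [Semiring F] (p n k : ℕ) (h1 : 1 ≤ k) (h2 : k < n) :
    Matrix (Fin (p ^ n)) (Fin (p ^ n)) F :=
  Matrix.reindex
    (finCongr (by
      have h : n - k - 1 + 2 + (k - 1) = n := by omega
      calc p ^ (n - k - 1) * (p * p) * p ^ (k - 1)
          = p ^ (n - k - 1) * p ^ 2 * p ^ (k - 1) := by rw [← pow_two]
        _ = p ^ (n - k - 1 + 2 + (k - 1)) := by rw [← pow_add, ← pow_add]
        _ = p ^ n := by rw [h]))
    (finCongr (by
      have h : n - k - 1 + 2 + (k - 1) = n := by omega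
      calc p ^ (n - k - 1) * (p * p) * p ^ (k - 1)
          = p ^ (n - k - 1) * p ^ 2 * p ^ (k - 1) := by rw [← pow_two]
        _ = p ^ (n - k - 1 + 2 + (k - 1)) := by rw [← pow_add, ← pow_add]
        _ = p ^ n := by rw [h]))
    (kron (kron (1 : Matrix (Fin (p ^ (n - k - 1))) (Fin (p ^ (n - k - 1))) F)
        ((Ep F p)ᵀ * Ep F p))
      (1 : Matrix (Fin (p ^ (k - 1))) (Fin (p ^ (k - 1))) F))

/-- The braid relators on the generators `σ_1, …, σ_{n−1}`: the commutators
`σ_i σ_j σ_i⁻¹ σ_j⁻¹` for `|i − j| ≥ 2` and the relators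
`σ_i σ_{i+1} σ_i σ_{i+1}⁻¹ σ_i⁻¹ σ_{i+1}⁻¹`. -/
def braidRels (n : ℕ) : Set (FreeGroup {i : ℕ // 1 ≤ i ∧ i < n}) :=
  {w | (∃ i j : {i : ℕ // 1 ≤ i ∧ i < n}, (i.1 + 2 ≤ j.1 ∨ j.1 + 2 ≤ i.1) ∧
          w = FreeGroup.of i * FreeGroup.of j * (FreeGroup.of i)⁻¹ * (FreeGroup.of j)⁻¹) ∨
       (∃ i j : {i : ℕ // 1 ≤ i ∧ i < n}, j.1 = i.1 + 1 ∧
          w = FreeGroup.of i * FreeGroup.of j * FreeGroup.of i *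
            (FreeGroup.of j)⁻¹ * (FreeGroup.of i)⁻¹ * (FreeGroup.of j)⁻¹)}

/-- The braid group `B_n`, presented by the generators `σ_1, …, σ_{n−1}` and the relations
`σ_i σ_j = σ_j σ_i` for `|i − j| ≥ 2` and `σ_i σ_{i+1} σ_i = σ_{i+1} σ_i σ_{i+1}`. -/
abbrev BraidGroup (n : ℕ) : Type := PresentedGroup (braidRels n)

set_option linter.unusedSectionVars false
namespace BraidRep

open Matrix

variable {F : Type*} [Field F]

/-! ### mcast: reindexing along equalities of natural numbers -/

def mcast {a b a' b' : ℕ} (h1 : a = a') (h2 : b = b')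
    (A : Matrix (Fin a) (Fin b) F) : Matrix (Fin a') (Fin b') F :=
  A.submatrix (finCongr h1.symm) (finCongr h2.symm)

@[simp] lemma mcast_apply {a b a' b' : ℕ} (h1 : a = a') (h2 : b = b')
    (A : Matrix (Fin a) (Fin b) F) (r : Fin a') (s : Fin b') :
    mcast h1 h2 A r s = A (finCongr h1.symm r) (finCongr h2.symm s) := rfl

lemma mcast_rfl {a b : ℕ} (h1 : a = a) (h2 : b = b) (A : Matrix (Fin a) (Fin b) F) :
    mcast h1 h2 A = A := by
  ext r s; simp [mcast]

lemma mcast_mcast {a b a' b' a'' b'' : ℕ} (h1 : a = a') (h2 : b = b')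
    (h3 : a' = a'') (h4 : b' = b'') (A : Matrix (Fin a) (Fin b) F) :
    mcast h3 h4 (mcast h1 h2 A) = mcast (h1.trans h3) (h2.trans h4) A := by
  subst h1; subst h2; subst h3; subst h4; simp only [mcast_rfl]

lemma mcast_mul {a b c a' b' c' : ℕ} (h1 : a = a') (h2 : b = b') (h3 : c = c')
    (A : Matrix (Fin a) (Fin b) F) (B : Matrix (Fin b) (Fin c) F) :
    mcast h1 h2 A * mcast h2 h3 B = mcast h1 h3 (A * B) := by
  subst h1; subst h2; subst h3; simp only [mcast_rfl]

lemma mcast_mul_left {a b c a' b' : ℕ} (h1 : a = a') (h2 : b = b')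
    (A : Matrix (Fin a) (Fin b) F) (B : Matrix (Fin b') (Fin c) F) :
    mcast h1 h2 A * B = mcast h1 rfl (A * mcast h2.symm rfl B) := by
  subst h1; subst h2; simp only [mcast_rfl]

lemma mcast_mul_right {a b c b' c' : ℕ} (h2 : b = b') (h3 : c = c')
    (A : Matrix (Fin a) (Fin b') F) (B : Matrix (Fin b) (Fin c) F) :
    A * mcast h2 h3 B = mcast rfl h3 (A * mcast h2 rfl B) := by
  subst h2; subst h3; simp only [mcast_rfl]

lemma mcast_one {a a' : ℕ} (h : a = a') :
    mcast (F := F) h h 1 = 1 := by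
  subst h; rw [mcast_rfl]

lemma mcast_smul {a b a' b' : ℕ} (h1 : a = a') (h2 : b = b') (x : F)
    (A : Matrix (Fin a) (Fin b) F) :
    mcast h1 h2 (x • A) = x • mcast h1 h2 A := by
  subst h1; subst h2; simp only [mcast_rfl]

lemma mcast_inj {a b a' b' : ℕ} (h1 : a = a') (h2 : b = b')
    (A B : Matrix (Fin a) (Fin b) F) (h : mcast h1 h2 A = mcast h1 h2 B) : A = B := by
  subst h1; subst h2; rwa [mcast_rfl, mcast_rfl] at h

/-! ### kron basics -/

lemma kron_apply {a b c d : ℕ} (A : Matrix (Fin a) (Fin b) F)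
    (B : Matrix (Fin c) (Fin d) F) (r : Fin (a * c)) (s : Fin (b * d)) :
    kron A B r s = A r.divNat s.divNat * B r.modNat s.modNat := rfl

@[simp] lemma divNat_prod {m n : ℕ} (u : Fin m) (v : Fin n) :
    (finProdFinEquiv (u, v)).divNat = u := by
  have h := finProdFinEquiv.symm_apply_apply (u, v)
  rw [finProdFinEquiv_symm_apply] at h
  exact congrArg Prod.fst h

@[simp] lemma modNat_prod {m n : ℕ} (u : Fin m) (v : Fin n) :
    (finProdFinEquiv (u, v)).modNat = v := by
  have h := finProdFinEquiv.symm_apply_apply (u, v)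
  rw [finProdFinEquiv_symm_apply] at h
  exact congrArg Prod.snd h

lemma sum_factor {m n : ℕ} (f : Fin (m * n) → F) :
    ∑ t : Fin (m * n), f t = ∑ u : Fin m, ∑ v : Fin n, f (finProdFinEquiv (u, v)) := by
  rw [← finProdFinEquiv.sum_comp f, Fintype.sum_prod_type]

lemma kron_mul {a b c a' b' c' : ℕ} (A : Matrix (Fin a) (Fin b) F)
    (B : Matrix (Fin a') (Fin b') F) (C : Matrix (Fin b) (Fin c) F)
    (D : Matrix (Fin b') (Fin c') F) :
    kron A B * kron C D = kron (A * C) (B * D) := by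
  ext r s
  rw [Matrix.mul_apply, kron_apply, Matrix.mul_apply, Matrix.mul_apply,
    Finset.sum_mul_sum]
  rw [sum_factor (fun t => kron A B r t * kron C D t s)]
  refine Finset.sum_congr rfl fun u _ => Finset.sum_congr rfl fun v _ => ?_
  rw [kron_apply, kron_apply, divNat_prod, modNat_prod]
  ring

lemma kron_one_one {a c : ℕ} :
    kron (1 : Matrix (Fin a) (Fin a) F) (1 : Matrix (Fin c) (Fin c) F) = 1 := by
  ext r s
  rw [kron_apply]
  by_cases h : r = s
  · subst h; simp
  · have : ¬(r.divNat = s.divNat ∧ r.modNat = s.modNat) := by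
      intro ⟨h1, h2⟩
      apply h
      have hh : finProdFinEquiv.symm r = finProdFinEquiv.symm s := by
        rw [finProdFinEquiv_symm_apply, finProdFinEquiv_symm_apply, h1, h2]
      exact finProdFinEquiv.symm.injective hh
    rcases not_and_or.mp this with h' | h' <;>
      simp [Matrix.one_apply, h, h']

lemma kron_smul_left {a b c d : ℕ} (x : F) (A : Matrix (Fin a) (Fin b) F)
    (B : Matrix (Fin c) (Fin d) F) :
    kron (x • A) B = x • kron A B := by
  ext r s; simp [kron_apply, mul_assoc]

lemma kron_smul_right {a b c d : ℕ} (x : F) (A : Matrix (Fin a) (Fin b) F)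
    (B : Matrix (Fin c) (Fin d) F) :
    kron A (x • B) = x • kron A B := by
  ext r s; simp [kron_apply]; ring

end BraidRep
namespace BraidRep
open Matrix
variable {F : Type*} [Field F]

lemma kron_mcast_left {a b c d a' b' : ℕ} (h1 : a = a') (h2 : b = b')
    (A : Matrix (Fin a) (Fin b) F) (B : Matrix (Fin c) (Fin d) F) :
    kron (mcast h1 h2 A) B = mcast (by rw [h1]) (by rw [h2]) (kron A B) := by
  subst h1; subst h2; simp only [mcast_rfl]

lemma kron_mcast_right {a b c d c' d' : ℕ} (h1 : c = c') (h2 : d = d')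
    (A : Matrix (Fin a) (Fin b) F) (B : Matrix (Fin c) (Fin d) F) :
    kron A (mcast h1 h2 B) = mcast (by rw [h1]) (by rw [h2]) (kron A B) := by
  subst h1; subst h2; simp only [mcast_rfl]

lemma kron_assoc {a b c d e f : ℕ} (A : Matrix (Fin a) (Fin b) F)
    (B : Matrix (Fin c) (Fin d) F) (C : Matrix (Fin e) (Fin f) F) :
    kron (kron A B) C =
      mcast (mul_assoc a c e).symm (mul_assoc b d f).symm (kron A (kron B C)) := by
  ext r s
  rw [mcast_apply, kron_apply, kron_apply, kron_apply, kron_apply, mul_assoc]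
  have hre : ((finCongr (mul_assoc a c e).symm.symm r : Fin (a * (c * e))) : ℕ) = (r : ℕ) := rfl
  have hse : ((finCongr (mul_assoc b d f).symm.symm s : Fin (b * (d * f))) : ℕ) = (s : ℕ) := rfl
  congr 1
  · congr 1 <;> apply Fin.ext
    · rw [Fin.coe_divNat, Fin.coe_divNat, Fin.coe_divNat, hre,
        Nat.div_div_eq_div_mul, mul_comm (e : ℕ) c]
    · rw [Fin.coe_divNat, Fin.coe_divNat, Fin.coe_divNat, hse,
        Nat.div_div_eq_div_mul, mul_comm (f : ℕ) d]
  · congr 1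
    · congr 1 <;> apply Fin.ext
      · rw [Fin.coe_modNat, Fin.coe_divNat, Fin.coe_divNat, Fin.coe_modNat, hre,
          ← Nat.mod_mul_right_div_self, mul_comm (e : ℕ) c]
      · rw [Fin.coe_modNat, Fin.coe_divNat, Fin.coe_divNat, Fin.coe_modNat, hse,
          ← Nat.mod_mul_right_div_self, mul_comm (f : ℕ) d]
    · congr 1 <;> apply Fin.ext
      · rw [Fin.coe_modNat, Fin.coe_modNat, Fin.coe_modNat, hre]
        exact (Nat.mod_mod_of_dvd _ (dvd_mul_left e c)).symm
      · rw [Fin.coe_modNat, Fin.coe_modNat, Fin.coe_modNat, hse]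
        exact (Nat.mod_mod_of_dvd _ (dvd_mul_left f d)).symm

lemma hMat_size (p n k : ℕ) (h1 : 1 ≤ k) (h2 : k < n) :
    p ^ (n - k - 1) * (p * p) * p ^ (k - 1) = p ^ n := by
  have h : n - k - 1 + 2 + (k - 1) = n := by omega
  calc p ^ (n - k - 1) * (p * p) * p ^ (k - 1)
      = p ^ (n - k - 1) * p ^ 2 * p ^ (k - 1) := by rw [← pow_two]
    _ = p ^ (n - k - 1 + 2 + (k - 1)) := by rw [← pow_add, ← pow_add]
    _ = p ^ n := by rw [h]

lemma hMat_eq (p n k : ℕ) (h1 : 1 ≤ k) (h2 : k < n) :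
    hMat F p n k h1 h2 = mcast (hMat_size p n k h1 h2) (hMat_size p n k h1 h2)
      (kron (kron (1 : Matrix (Fin (p ^ (n - k - 1))) (Fin (p ^ (n - k - 1))) F)
        ((Ep F p)ᵀ * Ep F p))
      (1 : Matrix (Fin (p ^ (k - 1))) (Fin (p ^ (k - 1))) F)) := by
  ext r s
  rfl

lemma EEt (p : ℕ) : Ep F p * (Ep F p)ᵀ = (p : F) • 1 := by
  ext r s
  have hr : r = 0 := Subsingleton.elim _ _
  have hs : s = 0 := Subsingleton.elim _ _
  subst hr; subst hs
  rw [Matrix.mul_apply]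
  rw [sum_factor (fun t => Ep F p 0 t * (Ep F p)ᵀ t 0)]
  simp only [Ep, transpose_apply, of_apply, divNat_prod, modNat_prod]
  simp [Finset.sum_ite_eq, Matrix.one_apply]

lemma M_sq (p : ℕ) : ((Ep F p)ᵀ * Ep F p) * ((Ep F p)ᵀ * Ep F p)
    = (p : F) • ((Ep F p)ᵀ * Ep F p) := by
  rw [Matrix.mul_assoc, ← Matrix.mul_assoc (Ep F p), EEt, Matrix.smul_mul, Matrix.mul_smul, Matrix.one_mul]

end BraidRep
namespace BraidRep
open Matrix
set_option linter.unusedSectionVars false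
variable {F : Type*} [Field F]

lemma prod_val {m n : ℕ} (u : Fin m) (v : Fin n) :
    ((finProdFinEquiv (u, v) : Fin (m * n)) : ℕ) = (v : ℕ) + n * u := rfl

lemma prod_assoc {m n o : ℕ} (h : m * n * o = m * (n * o)) (u : Fin m) (v : Fin n) (w : Fin o) :
    finCongr h (finProdFinEquiv (finProdFinEquiv (u, v), w)) =
      finProdFinEquiv (u, finProdFinEquiv (v, w)) := by
  apply Fin.ext
  rw [finCongr_apply, Fin.coe_cast, prod_val, prod_val, prod_val, prod_val]
  ring

lemma prod_assoc' {m n o : ℕ} (h : m * (n * o) = m * n * o) (u : Fin m) (v : Fin n) (w : Fin o) :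
    finCongr h (finProdFinEquiv (u, finProdFinEquiv (v, w))) =
      finProdFinEquiv (finProdFinEquiv (u, v), w) := by
  apply Fin.ext
  rw [finCongr_apply, Fin.coe_cast, prod_val, prod_val, prod_val, prod_val]
  ring

lemma sum_factor3 {m n o : ℕ} (f : Fin (m * n * o) → F) :
    ∑ t, f t = ∑ u : Fin m, ∑ v : Fin n, ∑ w : Fin o,
      f (finProdFinEquiv (finProdFinEquiv (u, v), w)) := by
  rw [sum_factor f, sum_factor (fun u' : Fin (m * n) => ∑ w : Fin o, f (finProdFinEquiv (u', w)))]

lemma sum_factor3' {m n o : ℕ} (f : Fin (m * (n * o)) → F) :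
    ∑ t, f t = ∑ u : Fin m, ∑ v : Fin n, ∑ w : Fin o,
      f (finProdFinEquiv (u, finProdFinEquiv (v, w))) := by
  rw [sum_factor f]
  exact Finset.sum_congr rfl fun u _ => sum_factor _

lemma Ep_apply_prod {p : ℕ} (x : Fin 1) (i j : Fin p) :
    Ep F p x (finProdFinEquiv (i, j)) = if i = j then 1 else 0 := by
  simp [Ep, divNat_prod, modNat_prod]

lemma snake1 (p : ℕ) (h : p * (p * p) = p * p * p) :
    kron (Ep F p) (1 : Matrix (Fin p) (Fin p) F) *
      mcast h rfl (kron (1 : Matrix (Fin p) (Fin p) F) (Ep F p)ᵀ) =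
    mcast (one_mul p).symm (mul_one p).symm 1 := by
  ext r s
  rw [Matrix.mul_apply, sum_factor3]
  simp only [kron_apply, mcast_apply, divNat_prod, modNat_prod, prod_assoc,
    Ep_apply_prod, transpose_apply]
  simp only [divNat_prod, modNat_prod, Matrix.one_apply]
  simp only [ite_mul, mul_ite, mul_one, mul_zero, zero_mul, one_mul,
    Finset.sum_ite_eq, Finset.sum_ite_eq', Finset.mem_univ, if_true]
  rw [Finset.sum_comm]
  simp only [Finset.sum_ite_eq, Finset.sum_ite_eq', Finset.mem_univ, if_true]
  refine if_congr ?_ rfl rfl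
  simp only [Fin.ext_iff, Fin.coe_divNat, Fin.coe_modNat, finCongr_apply, Fin.coe_cast,
    Nat.div_one]
  have hr : (r : ℕ) < p := by have := r.isLt; omega
  rw [Nat.mod_eq_of_lt hr]
  omega

end BraidRep
namespace BraidRep
open Matrix
set_option linter.unusedSectionVars false
variable {F : Type*} [Field F]

lemma snake2 (p : ℕ) (h : p * p * p = p * (p * p)) :
    kron (1 : Matrix (Fin p) (Fin p) F) (Ep F p) *
      mcast h rfl (kron (Ep F p)ᵀ (1 : Matrix (Fin p) (Fin p) F)) =
    mcast (mul_one p).symm (one_mul p).symm 1 := by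
  ext r s
  rw [Matrix.mul_apply, sum_factor3']
  simp only [kron_apply, mcast_apply, divNat_prod, modNat_prod, prod_assoc',
    Ep_apply_prod, transpose_apply]
  simp only [divNat_prod, modNat_prod, Matrix.one_apply]
  simp only [ite_mul, mul_ite, mul_one, mul_zero, zero_mul, one_mul,
    Finset.sum_ite_eq, Finset.sum_ite_eq', Finset.mem_univ, if_true]
  refine if_congr ?_ rfl rfl
  simp only [Fin.ext_iff, Fin.coe_divNat, Fin.coe_modNat, finCongr_apply, Fin.coe_cast,
    Nat.div_one]
  have hs : (s : ℕ) < p := by have := s.isLt; omega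
  rw [Nat.mod_eq_of_lt hs]

end BraidRep
namespace BraidRep
open Matrix
set_option linter.unusedSectionVars false
variable {F : Type*} [Field F]

/-- `U = 1_p ⊗ (EᵀE)`. -/
def Umat (F : Type*) [Field F] (p : ℕ) : Matrix (Fin (p * (p * p))) (Fin (p * (p * p))) F :=
  kron (1 : Matrix (Fin p) (Fin p) F) ((Ep F p)ᵀ * Ep F p)

/-- `W = (EᵀE) ⊗ 1_p`, recast. -/
def Wmat (F : Type*) [Field F] (p : ℕ) : Matrix (Fin (p * (p * p))) (Fin (p * (p * p))) F :=
  mcast (mul_assoc p p p) (mul_assoc p p p)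
    (kron ((Ep F p)ᵀ * Ep F p) (1 : Matrix (Fin p) (Fin p) F))

lemma Umat_factor (p : ℕ) :
    Umat F p = kron (1 : Matrix (Fin p) (Fin p) F) (Ep F p)ᵀ *
      kron (1 : Matrix (Fin p) (Fin p) F) (Ep F p) := by
  rw [Umat, kron_mul, Matrix.one_mul]

lemma Wmat_factor (p : ℕ) :
    Wmat F p = mcast (mul_assoc p p p) rfl (kron (Ep F p)ᵀ (1 : Matrix (Fin p) (Fin p) F)) *
      mcast rfl (mul_assoc p p p) (kron (Ep F p) (1 : Matrix (Fin p) (Fin p) F)) := by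
  have h1 : kron ((Ep F p)ᵀ * Ep F p) (1 : Matrix (Fin p) (Fin p) F)
      = kron (Ep F p)ᵀ (1 : Matrix (Fin p) (Fin p) F) * kron (Ep F p) (1 : Matrix (Fin p) (Fin p) F) := by
    rw [kron_mul, Matrix.one_mul]
  rw [Wmat, h1, ← mcast_mul (mul_assoc p p p) rfl (mul_assoc p p p)]

lemma Umat_sq (p : ℕ) : Umat F p * Umat F p = (p : F) • Umat F p := by
  rw [Umat, kron_mul, Matrix.one_mul, M_sq, kron_smul_right]

lemma Wmat_sq (p : ℕ) : Wmat F p * Wmat F p = (p : F) • Wmat F p := by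
  rw [Wmat, mcast_mul, kron_mul, Matrix.one_mul, M_sq, kron_smul_left, mcast_smul]

lemma UWU (p : ℕ) : Umat F p * Wmat F p * Umat F p = Umat F p := by
  set X1 := kron (1 : Matrix (Fin p) (Fin p) F) (Ep F p)ᵀ with hX1
  set X2 := kron (1 : Matrix (Fin p) (Fin p) F) (Ep F p) with hX2
  set Y1 := mcast (mul_assoc p p p) rfl (kron (Ep F p)ᵀ (1 : Matrix (Fin p) (Fin p) F)) with hY1
  set Y2 := mcast rfl (mul_assoc p p p) (kron (Ep F p) (1 : Matrix (Fin p) (Fin p) F)) with hY2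
  have e1 : X2 * Y1 = mcast (mul_one p).symm (one_mul p).symm 1 := snake2 p _
  have e2 : Y2 * X1 = mcast (one_mul p).symm (mul_one p).symm 1 := by
    rw [hY2, mcast_mul_left rfl (mul_assoc p p p), mcast_rfl,
      snake1 p (mul_assoc p p p).symm]
  have e3 : (mcast (mul_one p).symm (one_mul p).symm (1 : Matrix (Fin p) (Fin p) F)) *
      (mcast (one_mul p).symm (mul_one p).symm (1 : Matrix (Fin p) (Fin p) F)) = 1 := by
    rw [mcast_mul (mul_one p).symm (one_mul p).symm (mul_one p).symm, Matrix.one_mul, mcast_one]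
  calc Umat F p * Wmat F p * Umat F p
      = (X1 * X2) * (Y1 * Y2) * (X1 * X2) := by rw [Umat_factor, Wmat_factor]
    _ = X1 * ((X2 * Y1) * ((Y2 * X1) * X2)) := by simp only [Matrix.mul_assoc]
    _ = X1 * ((mcast (mul_one p).symm (one_mul p).symm (1 : Matrix (Fin p) (Fin p) F) *
          mcast (one_mul p).symm (mul_one p).symm (1 : Matrix (Fin p) (Fin p) F)) * X2) := by
        rw [e1, e2, Matrix.mul_assoc]
    _ = X1 * X2 := by rw [e3, Matrix.one_mul]
    _ = Umat F p := (Umat_factor p).symm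

lemma WUW (p : ℕ) : Wmat F p * Umat F p * Wmat F p = Wmat F p := by
  set X1 := kron (1 : Matrix (Fin p) (Fin p) F) (Ep F p)ᵀ with hX1
  set X2 := kron (1 : Matrix (Fin p) (Fin p) F) (Ep F p) with hX2
  set Y1 := mcast (mul_assoc p p p) rfl (kron (Ep F p)ᵀ (1 : Matrix (Fin p) (Fin p) F)) with hY1
  set Y2 := mcast rfl (mul_assoc p p p) (kron (Ep F p) (1 : Matrix (Fin p) (Fin p) F)) with hY2
  have e1 : X2 * Y1 = mcast (mul_one p).symm (one_mul p).symm 1 := snake2 p _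
  have e2 : Y2 * X1 = mcast (one_mul p).symm (mul_one p).symm 1 := by
    rw [hY2, mcast_mul_left rfl (mul_assoc p p p), mcast_rfl,
      snake1 p (mul_assoc p p p).symm]
  have e4 : (mcast (one_mul p).symm (mul_one p).symm (1 : Matrix (Fin p) (Fin p) F)) *
      (mcast (mul_one p).symm (one_mul p).symm (1 : Matrix (Fin p) (Fin p) F)) = 1 := by
    rw [mcast_mul (one_mul p).symm (mul_one p).symm (one_mul p).symm, Matrix.one_mul, mcast_one]
  calc Wmat F p * Umat F p * Wmat F p
      = (Y1 * Y2) * (X1 * X2) * (Y1 * Y2) := by rw [Umat_factor, Wmat_factor]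
    _ = Y1 * ((Y2 * X1) * ((X2 * Y1) * Y2)) := by simp only [Matrix.mul_assoc]
    _ = Y1 * ((mcast (one_mul p).symm (mul_one p).symm (1 : Matrix (Fin p) (Fin p) F) *
          mcast (mul_one p).symm (one_mul p).symm (1 : Matrix (Fin p) (Fin p) F)) * Y2) := by
        rw [e1, e2, Matrix.mul_assoc]
    _ = Y1 * Y2 := by rw [e4, Matrix.one_mul]
    _ = Wmat F p := (Wmat_factor p).symm

end BraidRep
namespace BraidRep
open Matrix
set_option linter.unusedSectionVars false
variable {F : Type*} [Field F]

lemma kron_assoc' {a b c d e f : ℕ} (A : Matrix (Fin a) (Fin b) F)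
    (B : Matrix (Fin c) (Fin d) F) (C : Matrix (Fin e) (Fin f) F) :
    kron A (kron B C) =
      mcast (mul_assoc a c e) (mul_assoc b d f) (kron (kron A B) C) := by
  rw [kron_assoc, mcast_mcast, mcast_rfl]

lemma hMat_sq (p n k : ℕ) (h1 : 1 ≤ k) (h2 : k < n) :
    hMat F p n k h1 h2 * hMat F p n k h1 h2 = (p : F) • hMat F p n k h1 h2 := by
  rw [hMat_eq, mcast_mul, kron_mul, kron_mul, M_sq]
  simp only [Matrix.one_mul]
  rw [kron_smul_right, kron_smul_left, mcast_smul]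

lemma szA (p n i : ℕ) (h2 : i + 1 < n) : p ^ (n - i - 2) * p = p ^ (n - i - 1) := by
  rw [← pow_succ]
  congr 1
  omega

lemma szU (p n i : ℕ) (h1 : 1 ≤ i) (h2 : i + 1 < n) :
    p ^ (n - i - 2) * (p * (p * p)) * p ^ (i - 1) = p ^ n := by
  have e : p ^ (n - i - 2) * (p * (p * p)) * p ^ (i - 1)
      = p ^ (n - i - 2) * p ^ 3 * p ^ (i - 1) := by ring
  rw [e, ← pow_add, ← pow_add]
  congr 1
  omega

lemma hMat_eq_U (p n i : ℕ) (h1 : 1 ≤ i) (hi : i < n) (h2 : i + 1 < n) :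
    hMat F p n i h1 hi = mcast (szU p n i h1 h2) (szU p n i h1 h2)
      (kron (kron (1 : Matrix (Fin (p ^ (n - i - 2))) (Fin (p ^ (n - i - 2))) F) (Umat F p))
        (1 : Matrix (Fin (p ^ (i - 1))) (Fin (p ^ (i - 1))) F)) := by
  rw [hMat_eq]
  have e1 : (1 : Matrix (Fin (p ^ (n - i - 1))) (Fin (p ^ (n - i - 1))) F)
      = mcast (szA p n i h2) (szA p n i h2)
        (kron (1 : Matrix (Fin (p ^ (n - i - 2))) (Fin (p ^ (n - i - 2))) F)
          (1 : Matrix (Fin p) (Fin p) F)) := by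
    rw [kron_one_one, mcast_one]
  rw [e1, kron_mcast_left, kron_mcast_left, mcast_mcast,
    kron_assoc (1 : Matrix (Fin (p ^ (n - i - 2))) (Fin (p ^ (n - i - 2))) F)
      (1 : Matrix (Fin p) (Fin p) F) ((Ep F p)ᵀ * Ep F p),
    kron_mcast_left, mcast_mcast]
  rfl

lemma szI (p i : ℕ) (h1 : 1 ≤ i) : p * p ^ (i - 1) = p ^ (i + 1 - 1) := by
  rw [← pow_succ']
  congr 1
  omega

lemma hMat_succ_eq_W (p n i : ℕ) (h1 : 1 ≤ i) (h2 : i + 1 < n) :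
    hMat F p n (i + 1) (by omega) h2 = mcast (szU p n i h1 h2) (szU p n i h1 h2)
      (kron (kron (1 : Matrix (Fin (p ^ (n - i - 2))) (Fin (p ^ (n - i - 2))) F) (Wmat F p))
        (1 : Matrix (Fin (p ^ (i - 1))) (Fin (p ^ (i - 1))) F)) := by
  have e2 : (1 : Matrix (Fin (p ^ (i + 1 - 1))) (Fin (p ^ (i + 1 - 1))) F)
      = mcast (szI p i h1) (szI p i h1)
        (kron (1 : Matrix (Fin p) (Fin p) F)
          (1 : Matrix (Fin (p ^ (i - 1))) (Fin (p ^ (i - 1))) F)) := by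
    rw [kron_one_one, mcast_one]
  have eW : kron ((Ep F p)ᵀ * Ep F p) (1 : Matrix (Fin p) (Fin p) F)
      = mcast (mul_assoc p p p).symm (mul_assoc p p p).symm (Wmat F p) := by
    rw [Wmat, mcast_mcast, mcast_rfl]
  rw [hMat_eq, e2, kron_mcast_right, mcast_mcast]
  rw [kron_assoc' (kron (1 : Matrix (Fin (p ^ (n - i - 2))) (Fin (p ^ (n - i - 2))) F)
      ((Ep F p)ᵀ * Ep F p)) (1 : Matrix (Fin p) (Fin p) F)
      (1 : Matrix (Fin (p ^ (i - 1))) (Fin (p ^ (i - 1))) F), mcast_mcast]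
  rw [kron_assoc (1 : Matrix (Fin (p ^ (n - i - 2))) (Fin (p ^ (n - i - 2))) F)
      ((Ep F p)ᵀ * Ep F p) (1 : Matrix (Fin p) (Fin p) F), kron_mcast_left, mcast_mcast]
  rw [eW, kron_mcast_right, kron_mcast_left, mcast_mcast]

end BraidRep
namespace BraidRep
open Matrix
set_option linter.unusedSectionVars false
variable {F : Type*} [Field F]

lemma hMat_TL1 (p n i : ℕ) (h1 : 1 ≤ i) (h2 : i + 1 < n) :
    hMat F p n i h1 (by omega) * hMat F p n (i + 1) (by omega) h2 *
      hMat F p n i h1 (by omega) = hMat F p n i h1 (by omega) := by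
  rw [hMat_eq_U p n i h1 (by omega) h2, hMat_succ_eq_W p n i h1 h2,
    mcast_mul, mcast_mul]
  simp only [kron_mul, Matrix.one_mul, Matrix.mul_one]
  rw [UWU]

lemma hMat_TL2 (p n i : ℕ) (h1 : 1 ≤ i) (h2 : i + 1 < n) :
    hMat F p n (i + 1) (by omega) h2 * hMat F p n i h1 (by omega) *
      hMat F p n (i + 1) (by omega) h2 = hMat F p n (i + 1) (by omega) h2 := by
  rw [hMat_eq_U p n i h1 (by omega) h2, hMat_succ_eq_W p n i h1 h2,
    mcast_mul, mcast_mul]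
  simp only [kron_mul, Matrix.one_mul, Matrix.mul_one]
  rw [WUW]

lemma szX (p n i j : ℕ) (h1 : 1 ≤ i) (hij : i + 2 ≤ j) (hj : j < n) :
    p ^ (n - j - 1) * (p * p) * p ^ (j - i - 2) * (p * p) * p ^ (i - 1) = p ^ n := by
  have e : p ^ (n - j - 1) * (p * p) * p ^ (j - i - 2) * (p * p) * p ^ (i - 1)
      = p ^ (n - j - 1) * p ^ 2 * p ^ (j - i - 2) * p ^ 2 * p ^ (i - 1) := by ring
  rw [e, ← pow_add, ← pow_add, ← pow_add, ← pow_add]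
  congr 1
  omega

lemma hMat_eq_X1 (p n i j : ℕ) (h1 : 1 ≤ i) (hij : i + 2 ≤ j) (hj : j < n) :
    hMat F p n i h1 (by omega) = mcast (szX p n i j h1 hij hj) (szX p n i j h1 hij hj)
      (kron (kron (kron (kron (1 : Matrix (Fin (p ^ (n - j - 1))) (Fin (p ^ (n - j - 1))) F)
          (1 : Matrix (Fin (p * p)) (Fin (p * p)) F))
          (1 : Matrix (Fin (p ^ (j - i - 2))) (Fin (p ^ (j - i - 2))) F))
        ((Ep F p)ᵀ * Ep F p))
        (1 : Matrix (Fin (p ^ (i - 1))) (Fin (p ^ (i - 1))) F)) := by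
  have τ : p ^ (n - j - 1) * (p * p) * p ^ (j - i - 2) = p ^ (n - i - 1) := by
    have e : p ^ (n - j - 1) * (p * p) * p ^ (j - i - 2)
        = p ^ (n - j - 1) * p ^ 2 * p ^ (j - i - 2) := by ring
    rw [e, ← pow_add, ← pow_add]
    congr 1
    omega
  have eA : (1 : Matrix (Fin (p ^ (n - i - 1))) (Fin (p ^ (n - i - 1))) F)
      = mcast τ τ (kron (kron (1 : Matrix (Fin (p ^ (n - j - 1))) (Fin (p ^ (n - j - 1))) F)
          (1 : Matrix (Fin (p * p)) (Fin (p * p)) F))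
          (1 : Matrix (Fin (p ^ (j - i - 2))) (Fin (p ^ (j - i - 2))) F)) := by
    rw [kron_one_one, kron_one_one, mcast_one]
  rw [hMat_eq, eA, kron_mcast_left, kron_mcast_left, mcast_mcast]

lemma hMat_eq_X2 (p n i j : ℕ) (h1 : 1 ≤ i) (hij : i + 2 ≤ j) (hj : j < n) :
    hMat F p n j (by omega) hj = mcast (szX p n i j h1 hij hj) (szX p n i j h1 hij hj)
      (kron (kron (kron (kron (1 : Matrix (Fin (p ^ (n - j - 1))) (Fin (p ^ (n - j - 1))) F)
          ((Ep F p)ᵀ * Ep F p))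
          (1 : Matrix (Fin (p ^ (j - i - 2))) (Fin (p ^ (j - i - 2))) F))
        (1 : Matrix (Fin (p * p)) (Fin (p * p)) F))
        (1 : Matrix (Fin (p ^ (i - 1))) (Fin (p ^ (i - 1))) F)) := by
  have υ : p ^ (j - i - 2) * (p * p) * p ^ (i - 1) = p ^ (j - 1) := by
    have e : p ^ (j - i - 2) * (p * p) * p ^ (i - 1)
        = p ^ (j - i - 2) * p ^ 2 * p ^ (i - 1) := by ring
    rw [e, ← pow_add, ← pow_add]
    congr 1
    omega
  have eC : (1 : Matrix (Fin (p ^ (j - 1))) (Fin (p ^ (j - 1))) F)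
      = mcast υ υ (kron (kron (1 : Matrix (Fin (p ^ (j - i - 2))) (Fin (p ^ (j - i - 2))) F)
          (1 : Matrix (Fin (p * p)) (Fin (p * p)) F))
          (1 : Matrix (Fin (p ^ (i - 1))) (Fin (p ^ (i - 1))) F)) := by
    rw [kron_one_one, kron_one_one, mcast_one]
  rw [hMat_eq, eC, kron_mcast_right, mcast_mcast]
  rw [kron_assoc' (kron (1 : Matrix (Fin (p ^ (n - j - 1))) (Fin (p ^ (n - j - 1))) F)
      ((Ep F p)ᵀ * Ep F p))
      (kron (1 : Matrix (Fin (p ^ (j - i - 2))) (Fin (p ^ (j - i - 2))) F)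
        (1 : Matrix (Fin (p * p)) (Fin (p * p)) F))
      (1 : Matrix (Fin (p ^ (i - 1))) (Fin (p ^ (i - 1))) F), mcast_mcast]
  rw [kron_assoc' (kron (1 : Matrix (Fin (p ^ (n - j - 1))) (Fin (p ^ (n - j - 1))) F)
      ((Ep F p)ᵀ * Ep F p))
      (1 : Matrix (Fin (p ^ (j - i - 2))) (Fin (p ^ (j - i - 2))) F)
      (1 : Matrix (Fin (p * p)) (Fin (p * p)) F), kron_mcast_left, mcast_mcast]

lemma hMat_comm (p n i j : ℕ) (h1 : 1 ≤ i) (hij : i + 2 ≤ j) (hj : j < n) :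
    hMat F p n i h1 (by omega) * hMat F p n j (by omega) hj =
      hMat F p n j (by omega) hj * hMat F p n i h1 (by omega) := by
  rw [hMat_eq_X1 p n i j h1 hij hj, hMat_eq_X2 p n i j h1 hij hj, mcast_mul, mcast_mul]
  simp only [kron_mul, Matrix.one_mul, Matrix.mul_one]

end BraidRep
namespace BraidRep
open Matrix
set_option linter.unusedSectionVars false

section Alg
variable {R : Type*} {F : Type*} [Field F] [Ring R] [Algebra F R]

lemma alg_braid (a b c : F) (hrel : a ^ 2 + b ^ 2 + c * a * b = 0) (x y : R)
    (hx : x * x = c • x) (hy : y * y = c • y) (hxyx : x * y * x = x) (hyxy : y * x * y = y) :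
    (a • x + b • 1) * (a • y + b • 1) * (a • x + b • 1) =
      (a • y + b • 1) * (a • x + b • 1) * (a • y + b • 1) := by
  have expand : ∀ u v : R, u * u = c • u → u * v * u = u →
      (a • u + b • 1) * (a • v + b • 1) * (a • u + b • 1) =
        (a * b * b) • u + (a * b * b) • v + (a * a * b) • (u * v) + (a * a * b) • (v * u) +
          (b * b * b) • 1 := by
    intro u v hu huvu
    simp only [add_mul, mul_add, smul_mul_assoc, mul_smul_comm, smul_smul, mul_one, one_mul]
    rw [huvu, hu]
    simp only [smul_smul]
    match_scalars <;>
      (first | ring1 | linear_combination a * hrel | linear_combination (-a) * hrel)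
  rw [expand x y hx hxyx, expand y x hy hyxy]
  module

lemma alg_inv (a b c : F) (ha : a ≠ 0) (hb : b ≠ 0)
    (hrel : a ^ 2 + b ^ 2 + c * a * b = 0) (x : R) (hx : x * x = c • x) :
    (a • x + b • 1) * (a⁻¹ • x + b⁻¹ • 1) = 1 ∧
      (a⁻¹ • x + b⁻¹ • 1) * (a • x + b • 1) = 1 := by
  constructor <;>
  · simp only [add_mul, mul_add, smul_mul_assoc, mul_smul_comm, smul_smul, mul_one, one_mul]
    rw [hx]
    simp only [smul_smul]
    match_scalars <;> field_simp <;>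
      (first | ring1 | linear_combination hrel | linear_combination a * hrel |
        linear_combination b * hrel | linear_combination a * b * hrel |
        linear_combination (-1 : F) * hrel)
end Alg

end BraidRep

namespace BraidRep
section Alg2
variable {R : Type*} {F : Type*} [Field F] [Ring R] [Algebra F R]
lemma alg_comm (a b : F) (x y : R) (h : x * y = y * x) :
    (a • x + b • 1) * (a • y + b • 1) = (a • y + b • 1) * (a • x + b • 1) := by
  simp only [add_mul, mul_add, smul_mul_assoc, mul_smul_comm, smul_smul, mul_one, one_mul]
  rw [h]
  module
end Alg2
end BraidRep
/-- Representation of the braid group in matrices: let `F` be a field, `n ≥ 2`, `p ≥ 1`,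
and `α, β` nonzero elements of `F` with `α² + β² + p·α·β = 0`.  Put
`A_i = α·h_i^n + β·1`.  Then the `A_i` satisfy the braid relations, each `A_i` is
invertible with inverse `α⁻¹·h_i^n + β⁻¹·1`, and consequently there is a group
homomorphism from `B_n` to the group of invertible `p^n × p^n` matrices over `F`
sending `σ_i` to `A_i`. -/
theorem braid_group_representation (F : Type*) [Field F] (p n : ℕ)
    (hp : 1 ≤ p) (hn : 2 ≤ n) (a b : F) (ha : a ≠ 0) (hb : b ≠ 0)
    (hrel : a ^ 2 + b ^ 2 + (p : F) * a * b = 0) :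
    (∀ (i j : ℕ) (hi1 : 1 ≤ i) (hi2 : i < n) (hj1 : 1 ≤ j) (hj2 : j < n),
      i + 2 ≤ j ∨ j + 2 ≤ i →
      (a • hMat F p n i hi1 hi2 + b • 1) * (a • hMat F p n j hj1 hj2 + b • 1) =
        (a • hMat F p n j hj1 hj2 + b • 1) * (a • hMat F p n i hi1 hi2 + b • 1)) ∧
    (∀ (i : ℕ) (h1 : 1 ≤ i) (h2 : i + 1 < n),
      (a • hMat F p n i h1 (by omega) + b • 1) * (a • hMat F p n (i + 1) (by omega) h2 + b • 1) *
          (a • hMat F p n i h1 (by omega) + b • 1) =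
        (a • hMat F p n (i + 1) (by omega) h2 + b • 1) * (a • hMat F p n i h1 (by omega) + b • 1) *
          (a • hMat F p n (i + 1) (by omega) h2 + b • 1)) ∧
    (∀ (i : ℕ) (h1 : 1 ≤ i) (h2 : i < n),
      (a • hMat F p n i h1 h2 + b • 1) * (a⁻¹ • hMat F p n i h1 h2 + b⁻¹ • 1) = 1 ∧
      (a⁻¹ • hMat F p n i h1 h2 + b⁻¹ • 1) * (a • hMat F p n i h1 h2 + b • 1) = 1) ∧
    ∃ f : BraidGroup n →* (Matrix (Fin (p ^ n)) (Fin (p ^ n)) F)ˣ,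
      ∀ (i : ℕ) (h1 : 1 ≤ i) (h2 : i < n),
        (f (PresentedGroup.of ⟨i, h1, h2⟩) : Matrix (Fin (p ^ n)) (Fin (p ^ n)) F) =
          a • hMat F p n i h1 h2 + b • 1 := by
  classical
  have b1 : ∀ (i j : ℕ) (hi1 : 1 ≤ i) (hi2 : i < n) (hj1 : 1 ≤ j) (hj2 : j < n),
      i + 2 ≤ j ∨ j + 2 ≤ i →
      hMat F p n i hi1 hi2 * hMat F p n j hj1 hj2 =
        hMat F p n j hj1 hj2 * hMat F p n i hi1 hi2 := by
    intro i j hi1 hi2 hj1 hj2 hd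
    rcases hd with h | h
    · exact BraidRep.hMat_comm p n i j hi1 h hj2
    · exact (BraidRep.hMat_comm p n j i hj1 h hi2).symm
  have bullet1 : ∀ (i j : ℕ) (hi1 : 1 ≤ i) (hi2 : i < n) (hj1 : 1 ≤ j) (hj2 : j < n),
      i + 2 ≤ j ∨ j + 2 ≤ i →
      (a • hMat F p n i hi1 hi2 + b • 1) * (a • hMat F p n j hj1 hj2 + b • 1) =
        (a • hMat F p n j hj1 hj2 + b • 1) * (a • hMat F p n i hi1 hi2 + b • 1) :=
    fun i j hi1 hi2 hj1 hj2 hd =>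
      BraidRep.alg_comm a b _ _ (b1 i j hi1 hi2 hj1 hj2 hd)
  have bullet2 : ∀ (i : ℕ) (h1 : 1 ≤ i) (h2 : i + 1 < n),
      (a • hMat F p n i h1 (by omega) + b • 1) *
          (a • hMat F p n (i + 1) (by omega) h2 + b • 1) *
          (a • hMat F p n i h1 (by omega) + b • 1) =
        (a • hMat F p n (i + 1) (by omega) h2 + b • 1) *
          (a • hMat F p n i h1 (by omega) + b • 1) *
          (a • hMat F p n (i + 1) (by omega) h2 + b • 1) :=
    fun i h1 h2 =>
      BraidRep.alg_braid a b (p : F) hrel _ _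
        (BraidRep.hMat_sq p n i h1 (by omega))
        (BraidRep.hMat_sq p n (i + 1) (by omega) h2)
        (BraidRep.hMat_TL1 p n i h1 h2) (BraidRep.hMat_TL2 p n i h1 h2)
  have bullet3 : ∀ (i : ℕ) (h1 : 1 ≤ i) (h2 : i < n),
      (a • hMat F p n i h1 h2 + b • 1) * (a⁻¹ • hMat F p n i h1 h2 + b⁻¹ • 1) = 1 ∧
      (a⁻¹ • hMat F p n i h1 h2 + b⁻¹ • 1) * (a • hMat F p n i h1 h2 + b • 1) = 1 :=
    fun i h1 h2 =>
      BraidRep.alg_inv a b (p : F) ha hb hrel _ (BraidRep.hMat_sq p n i h1 h2)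
  refine ⟨bullet1, bullet2, bullet3, ?_⟩
  set f : {i : ℕ // 1 ≤ i ∧ i < n} → (Matrix (Fin (p ^ n)) (Fin (p ^ n)) F)ˣ := fun x =>
    { val := a • hMat F p n x.1 x.2.1 x.2.2 + b • 1
      inv := a⁻¹ • hMat F p n x.1 x.2.1 x.2.2 + b⁻¹ • 1
      val_inv := (bullet3 x.1 x.2.1 x.2.2).1
      inv_val := (bullet3 x.1 x.2.1 x.2.2).2 } with hf
  have hrels : ∀ r ∈ braidRels n, FreeGroup.lift f r = 1 := by
    intro r hr
    rcases hr with ⟨i, j, hd, rfl⟩ | ⟨i, j, hji, rfl⟩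
    · simp only [_root_.map_mul, _root_.map_inv, FreeGroup.lift_apply_of]
      have hcomm : f i * f j = f j * f i :=
        Units.ext (bullet1 i.1 j.1 i.2.1 i.2.2 j.2.1 j.2.2 hd)
      rw [hcomm]
      group
    · simp only [_root_.map_mul, _root_.map_inv, FreeGroup.lift_apply_of]
      obtain ⟨j, hj1, hj2⟩ := j
      simp only at hji
      subst hji
      have hbr : f i * f ⟨i.1 + 1, hj1, hj2⟩ * f i =
          f ⟨i.1 + 1, hj1, hj2⟩ * f i * f ⟨i.1 + 1, hj1, hj2⟩ :=
        Units.ext (bullet2 i.1 i.2.1 hj2)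
      rw [hbr]
      group
  refine ⟨PresentedGroup.toGroup hrels, ?_⟩
  intro i h1 h2
  rw [PresentedGroup.toGroup.of]
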